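/- For the 2×2 matrix L(x,α,ζ) = [[ζ, αx],[α/x, ζ]] with x,u,y,v positive reals and α,β positive parameters, if L(u,α,ζ)·L(v,β,ζ) = L(y,β,ζ)·L(x,α,ζ) holds for all ζ, then u = y(αx+βy)/(βx+αy) and v = x(αx+βy)/(βx+αy), i.e. L is a strong Lax matrix of the Yang–Baxter map R_{α,β}. -/

import Mathlib

open Matrix

/-- The Lax matrix `L(x,α,ζ) = [[ζ, αx],[α/x, ζ]]`. -/
noncomputable def Lax (x α ζ : ℝ) : Matrix (Fin 2) (Fin 2) ℝ :=
  !![ζ, α * x; α / x, ζ]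

/-- `L` is a strong Lax matrix: the Lax equation (for all ζ) forces
`u = y(αx+βy)/(βx+αy)` and `v = x(αx+βy)/(βx+αy)`. -/
theorem strong_Lax (α β x y u v : ℝ)
    (hα : 0 < α) (hβ : 0 < β) (hx : 0 < x) (hy : 0 < y) (hu : 0 < u) (hv : 0 < v)
    (h : ∀ ζ : ℝ, Lax u α ζ * Lax v β ζ = Lax y β ζ * Lax x α ζ) :
    u = y * (α * x + β * y) / (β * x + α * y) ∧
    v = x * (α * x + β * y) / (β * x + α * y) := by
  have H := h 1
  have h00 := congrFun (congrFun H 0) 0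
  have h01 := congrFun (congrFun H 0) 1
  simp [Lax, Matrix.mul_apply, Fin.sum_univ_two] at h00 h01
  have hd : 0 < β * x + α * y := by positivity
  have e1 : u * x = y * v := by
    field_simp at h00
    have h2 : (α * β) * (u * x) = (α * β) * (y * v) := by rw [h00]; ring
    exact mul_left_cancel₀ (by positivity) h2
  have e2 : β * v + α * u = α * x + β * y := by linarith [h01]
  constructor
  · rw [eq_div_iff hd.ne']
    nlinarith [e1, e2]
  · rw [eq_div_iff hd.ne']
    nlinarith [e1, e2]
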